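/- For every real constant c, the function (A, v) ↦ √(1 + A² + c²·v⁴) is convex on ℝ × ℝ. -/

import Mathlib

noncomputable def e3 (x y z : ℝ) : EuclideanSpace ℝ (Fin 3) := WithLp.toLp 2 ![x, y, z]

theorem stmt_11 (c : ℝ) :
    ConvexOn ℝ (Set.univ : Set (ℝ × ℝ))
      (fun p : ℝ × ℝ => Real.sqrt (1 + p.1 ^ 2 + c ^ 2 * p.2 ^ 4)) := by
  have hnorm : ∀ (x z : ℝ), ‖e3 1 x z‖
      = Real.sqrt (1 + x ^ 2 + z ^ 2) := by
    intro x z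
    rw [e3, EuclideanSpace.norm_eq]
    congr 1
    simp [Fin.sum_univ_three, Real.norm_eq_abs, sq_abs]
  refine ⟨convex_univ, ?_⟩
  rintro ⟨a1, a2⟩ - ⟨b1, b2⟩ - l m hl hm hsum
  simp only [Prod.smul_mk, Prod.mk_add_mk, smul_eq_mul]
  set u : EuclideanSpace ℝ (Fin 3) := e3 1 a1 (c * a2 ^ 2) with hu
  set v : EuclideanSpace ℝ (Fin 3) := e3 1 b1 (c * b2 ^ 2) with hv
  have hcomb : e3 1 (l * a1 + m * b1) (c * (l * a2 ^ 2 + m * b2 ^ 2)) = l • u + m • v := by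
    ext i
    fin_cases i <;>
      simp [hu, hv, e3, PiLp.add_apply, PiLp.smul_apply, smul_eq_mul] <;> ring_nf
    · linarith
  have step1 : Real.sqrt (1 + (l * a1 + m * b1) ^ 2 + c ^ 2 * (l * a2 + m * b2) ^ 4)
      ≤ ‖e3 1 (l * a1 + m * b1) (c * (l * a2 ^ 2 + m * b2 ^ 2))‖ := by
    rw [hnorm]
    apply Real.sqrt_le_sqrt
    have h1 : (l * a2 + m * b2) ^ 2 ≤ l * a2 ^ 2 + m * b2 ^ 2 := by
      nlinarith [sq_nonneg (a2 - b2), mul_nonneg hl hm]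
    have h2 : (l * a2 + m * b2) ^ 4 ≤ (l * a2 ^ 2 + m * b2 ^ 2) ^ 2 := by
      nlinarith [sq_nonneg (l * a2 + m * b2)]
    nlinarith [sq_nonneg c]
  have step2 : ‖l • u + m • v‖ ≤ l * ‖u‖ + m * ‖v‖ := by
    calc ‖l • u + m • v‖ ≤ ‖l • u‖ + ‖m • v‖ := norm_add_le _ _
      _ = l * ‖u‖ + m * ‖v‖ := by
          rw [norm_smul, norm_smul, Real.norm_eq_abs, Real.norm_eq_abs,
            abs_of_nonneg hl, abs_of_nonneg hm]
  have hfa : Real.sqrt (1 + a1 ^ 2 + c ^ 2 * a2 ^ 4) = ‖u‖ := by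
    rw [hu, hnorm]; ring_nf
  have hfb : Real.sqrt (1 + b1 ^ 2 + c ^ 2 * b2 ^ 4) = ‖v‖ := by
    rw [hv, hnorm]; ring_nf
  calc Real.sqrt (1 + (l * a1 + m * b1) ^ 2 + c ^ 2 * (l * a2 + m * b2) ^ 4)
      ≤ ‖l • u + m • v‖ := by rw [← hcomb]; exact step1
    _ ≤ l * ‖u‖ + m * ‖v‖ := step2
    _ = l * Real.sqrt (1 + a1 ^ 2 + c ^ 2 * a2 ^ 4)
        + m * Real.sqrt (1 + b1 ^ 2 + c ^ 2 * b2 ^ 4) := by rw [hfa, hfb]
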